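/- Let B be a C*-algebra, E a Hilbert B-module, I a closed two-sided ideal of B, and K the closed linear span of {x·i : x ∈ E, i ∈ I}. Let K^⊥ = {x ∈ E : ⟨x,k⟩ = 0 for all k ∈ K} and K^⊥⊥ = (K^⊥)^⊥. Then I is essential for the range algebra of K^⊥⊥: for every b in the closed linear span of {⟨x,y⟩ : x, y ∈ K^⊥⊥}, if b·i = 0 for all i ∈ I then b = 0. -/

import Mathlib

open scoped RightActions

/-- The closed linear span of a subset of a topological `ℂ`-module. -/
noncomputable def clSpan {M : Type*} [AddCommMonoid M] [Module ℂ M] [TopologicalSpace M]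
    (S : Set M) : Set M :=
  closure (Submodule.span ℂ S : Set M)

/-- A subset is a (complex) linear subspace. -/
def IsLinearSubspace {M : Type*} [AddCommMonoid M] [Module ℂ M] (K : Set M) : Prop :=
  (0 : M) ∈ K ∧ (∀ x ∈ K, ∀ y ∈ K, x + y ∈ K) ∧ ∀ (c : ℂ), ∀ x ∈ K, c • x ∈ K

/-- A closed two-sided ideal of a C*-algebra `B`. -/
structure IsClosedTwoSidedIdeal {B : Type*} [NonUnitalCStarAlgebra B] (I : Set B) : Prop where
  isClosed : IsClosed I
  subspace : IsLinearSubspace I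
  mul_mem_left : ∀ (b : B), ∀ a ∈ I, b * a ∈ I
  mul_mem_right : ∀ (b : B), ∀ a ∈ I, a * b ∈ I

/-- The Hilbert C⋆-module class as it stood in Mathlib of December 2024 (right `Aᵐᵒᵖ`-action). -/
class CStarModuleRight (A E : Type*) [NonUnitalSemiring A] [StarRing A] [Module ℂ A]
    [AddCommGroup E] [Module ℂ E] [PartialOrder A] [SMul Aᵐᵒᵖ E] [Norm A] [Norm E]
    extends Inner A E where
  inner_add_right {x} {y} {z} : inner x (y + z) = inner x y + inner x z
  inner_self_nonneg {x} : 0 ≤ inner x x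
  inner_self {x} : inner x x = 0 ↔ x = 0
  inner_op_smul_right {a : A} {x y : E} : inner x (y <• a) = inner x y * a
  inner_smul_right_complex {z : ℂ} {x} {y} : inner x (z • y) = z • inner x y
  star_inner x y : star (inner x y) = inner y x
  norm_eq_sqrt_norm_inner_self x : ‖x‖ = Real.sqrt ‖inner x x‖

section HilbertModule

variable (B : Type*) [NonUnitalCStarAlgebra B] [PartialOrder B] [StarOrderedRing B]
variable {E : Type*} [NormedAddCommGroup E] [NormedSpace ℂ E] [SMul Bᵐᵒᵖ E] [CStarModuleRight B E]

/-- `K ⊆ E` is an *ideal submodule* if it is the closed linear span of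
`{x <• i : x ∈ E, i ∈ I}` for some closed two-sided ideal `I` of `B`. -/
def IsIdealSubmodule (K : Set E) : Prop :=
  ∃ I : Set B, IsClosedTwoSidedIdeal I ∧
    K = clSpan {z : E | ∃ x : E, ∃ i ∈ I, z = x <• i}

/-- A *ternary ideal* of a Hilbert `B`-module `E`: a linear subspace `K` with
`x <• ⟪k, y⟫ ∈ K` for all `x y ∈ E` and `k ∈ K`. -/
def IsTernaryIdeal (K : Set E) : Prop :=
  IsLinearSubspace K ∧ ∀ (x y : E), ∀ k ∈ K, x <• (inner B k y : B) ∈ K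

/-- `B_S`: the closed linear span in `B` of all inner products of elements of `S`. -/
noncomputable def rangeIdeal (S : Set E) : Set B :=
  clSpan {b : B | ∃ k ∈ S, ∃ k' ∈ S, b = (inner B k k' : B)}

/-- The orthogonal complement of a subset of a Hilbert `B`-module. -/
def perp (S : Set E) : Set E :=
  {x : E | ∀ s ∈ S, (inner B x s : B) = 0}

end HilbertModule

section CrmLemmas

variable {B : Type*} [NonUnitalCStarAlgebra B] [PartialOrder B] [StarOrderedRing B]
variable {E : Type*} [NormedAddCommGroup E] [NormedSpace ℂ E] [SMul Bᵐᵒᵖ E] [CStarModuleRight B E]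

/-- The inner product with a fixed left argument, as a linear map. -/
noncomputable def crmInnerRight (x : E) : E →ₗ[ℂ] B where
  toFun k := inner B x k
  map_add' _ _ := CStarModuleRight.inner_add_right
  map_smul' _ _ := CStarModuleRight.inner_smul_right_complex

lemma crm_inner_zero_right (x : E) : inner B x (0 : E) = 0 :=
  (crmInnerRight (B := B) x).map_zero

lemma crm_inner_sub_right (x y z : E) : inner B x (y - z) = inner B x y - inner B x z :=
  (crmInnerRight (B := B) x).map_sub y z

lemma crm_inner_sub_left (x y z : E) : inner B (x - y) z = inner B x z - inner B y z := by
  rw [← CStarModuleRight.star_inner, crm_inner_sub_right, star_sub,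
    CStarModuleRight.star_inner, CStarModuleRight.star_inner]

lemma crm_inner_smul_left_complex (c : ℂ) (x y : E) :
    inner B (c • x) y = star c • inner B x y := by
  rw [← CStarModuleRight.star_inner, CStarModuleRight.inner_smul_right_complex, star_smul,
    CStarModuleRight.star_inner]

lemma crm_inner_op_smul_left (a : B) (x y : E) :
    inner B (x <• a) y = star a * inner B x y := by
  rw [← CStarModuleRight.star_inner, CStarModuleRight.inner_op_smul_right, star_mul,
    CStarModuleRight.star_inner]

lemma crm_norm_inner_le (x y : E) : ‖(inner B x y : B)‖ ≤ ‖x‖ * ‖y‖ := by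
  set a : B := inner B x y with ha
  set r : ℝ := ‖x‖ ^ 2 with hr
  have hxx : ‖(inner B x x : B)‖ = r := by
    rw [hr, CStarModuleRight.norm_eq_sqrt_norm_inner_self (A := B) x, Real.sq_sqrt (norm_nonneg _)]
  have hyy : ‖(inner B y y : B)‖ = ‖y‖ ^ 2 := by
    rw [CStarModuleRight.norm_eq_sqrt_norm_inner_self (A := B) y, Real.sq_sqrt (norm_nonneg _)]
  have hstar : star a = inner B y x := CStarModuleRight.star_inner x y
  have h0 : (0 : B) ≤ inner B (x <• a - (r : ℂ) • y) (x <• a - (r : ℂ) • y) :=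
    CStarModuleRight.inner_self_nonneg
  rw [crm_inner_sub_left, crm_inner_sub_right, crm_inner_sub_right, crm_inner_op_smul_left,
    crm_inner_op_smul_left, crm_inner_smul_left_complex, crm_inner_smul_left_complex,
    CStarModuleRight.inner_op_smul_right, CStarModuleRight.inner_op_smul_right,
    CStarModuleRight.inner_smul_right_complex, CStarModuleRight.inner_smul_right_complex,
    ← ha, ← hstar, Complex.star_def, Complex.conj_ofReal, Complex.coe_smul, Complex.coe_smul,
    Complex.coe_smul, Complex.coe_smul] at h0
  have hconj : star a * inner B x x * a ≤ r • (star a * a) := by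
    rw [← hxx]
    exact CStarAlgebra.star_left_conjugate_le_norm_smul (hb := CStarModuleRight.star_inner x x)
  have h1 : r • (star a * a) ≤ r ^ 2 • (inner B y y : B) := by
    have h2 : (0 : B) ≤ r • (star a * a) - r • (star a * a) - r • (star a * a)
        + r • r • (inner B y y : B) := by
      calc (0 : B) ≤ _ := h0
        _ = star a * inner B x x * a - r • (star a * a) - r • (star a * a)
            + r • r • (inner B y y : B) := by
          rw [mul_assoc, mul_smul_comm]; abel
        _ ≤ _ := by gcongr
    rw [sub_self, zero_sub, ← sub_eq_neg_add, sub_nonneg, smul_smul, ← pow_two] at h2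
    exact h2
  have hn : ‖r • (star a * a)‖ ≤ ‖r ^ 2 • (inner B y y : B)‖ :=
    CStarAlgebra.norm_le_norm_of_nonneg_of_le
      (smul_nonneg (by positivity) (star_mul_self_nonneg a)) h1
  rw [norm_smul, norm_smul, CStarRing.norm_star_mul_self, hyy, Real.norm_eq_abs,
    Real.norm_eq_abs, abs_of_nonneg (by positivity), abs_of_nonneg (by positivity)] at hn
  rcases eq_or_lt_of_le (norm_nonneg x) with hx | hx
  · have : x = 0 := norm_eq_zero.mp hx.symm
    have : a = 0 := by
      rw [ha, ← CStarModuleRight.star_inner, this, crm_inner_zero_right, star_zero]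
    rw [this, norm_zero]; positivity
  · have hrpos : 0 < r := by positivity
    have h3 : ‖a‖ ^ 2 ≤ (‖x‖ * ‖y‖) ^ 2 := by
      rw [mul_pow, ← hr]; nlinarith
    exact (pow_le_pow_iff_left₀ (norm_nonneg a) (by positivity) (by norm_num)).mp h3

lemma crm_continuous_inner_right (x : E) : Continuous (fun k : E => (inner B x k : B)) :=
  ((crmInnerRight (B := B) x).mkContinuous ‖x‖ fun k => crm_norm_inner_le x k).continuous

end CrmLemmas

/-- for a closed two-sided ideal `I` of `B` with associated ideal submodule
`K`, the ideal `I` is essential for the range algebra of `K^⊥⊥`. -/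
theorem essential_for_biorthogonal_complement
    {B : Type*} [NonUnitalCStarAlgebra B] [PartialOrder B] [StarOrderedRing B]
    {E : Type*} [NormedAddCommGroup E] [NormedSpace ℂ E] [SMul Bᵐᵒᵖ E]
    [CStarModuleRight B E] [CompleteSpace E] (I : Set B) (hI : IsClosedTwoSidedIdeal I)
    (K : Set E) (hKdef : K = clSpan {z : E | ∃ x : E, ∃ i ∈ I, z = x <• i}) :
    ∀ b ∈ rangeIdeal B (perp B (perp B K)), (∀ i ∈ I, b * i = 0) → b = 0 := by
  intro b hb hbI
  -- Step A: for any `x : E` and `k ∈ K`, the inner product `⟪x, k⟫` lies in `I`.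
  have hA : ∀ (x : E), ∀ k ∈ K, (inner B x k : B) ∈ I := by
    intro x k hk
    rw [hKdef] at hk
    have hclosed : IsClosed {k : E | (inner B x k : B) ∈ I} :=
      hI.isClosed.preimage (crm_continuous_inner_right x)
    have hspan : (Submodule.span ℂ {z : E | ∃ x : E, ∃ i ∈ I, z = x <• i} : Set E) ⊆
        {k : E | (inner B x k : B) ∈ I} := by
      intro k hk
      induction hk using Submodule.span_induction with
      | mem z hz =>
        obtain ⟨w, i, hi, rfl⟩ := hz
        simpa [CStarModuleRight.inner_op_smul_right] using hI.mul_mem_left (inner B x w) i hi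
      | zero => simpa [crm_inner_zero_right] using hI.subspace.1
      | add y z _ _ hy hz =>
        simpa [CStarModuleRight.inner_add_right] using hI.subspace.2.1 _ hy _ hz
      | smul c y _ hy =>
        simpa [CStarModuleRight.inner_smul_right_complex] using hI.subspace.2.2 c _ hy
    exact closure_minimal hspan hclosed hk
  -- Step B: for any `y : E`, `y <• star b ∈ K^⊥`.
  have hB : ∀ y : E, (y <• (star b) : E) ∈ perp B K := by
    intro y k hk
    rw [crm_inner_op_smul_left, star_star]
    exact hbI _ (hA y k hk)
  -- Step C: for generators `⟪x, y⟫` with `x, y ∈ K^⊥⊥`, we have `⟪x, y⟫ * star b = 0`.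
  have hC : ∀ x ∈ perp B (perp B K), ∀ y : E, (inner B x y : B) * star b = 0 := by
    intro x hx y
    have := hx (y <• (star b)) (hB y)
    rwa [CStarModuleRight.inner_op_smul_right] at this
  -- Conclude `b * star b = 0` by linearity and continuity.
  have hbb : b * star b = 0 := by
    have hclosed : IsClosed {c : B | c * star b = 0} :=
      isClosed_singleton.preimage (continuous_mul_right (star b))
    have hspan : (Submodule.span ℂ
        {c : B | ∃ k ∈ perp B (perp B K), ∃ k' ∈ perp B (perp B K), c = (inner B k k' : B)} : Set B)
        ⊆ {c : B | c * star b = 0} := by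
      intro c hc
      induction hc using Submodule.span_induction with
      | mem c hc =>
        obtain ⟨k, hk, k', _, rfl⟩ := hc
        exact hC k hk k'
      | zero => simp
      | add y z _ _ hy hz =>
        simp only [Set.mem_setOf_eq] at hy hz ⊢
        rw [add_mul, hy, hz, add_zero]
      | smul c y _ hy =>
        simp only [Set.mem_setOf_eq] at hy ⊢
        rw [smul_mul_assoc, hy, smul_zero]
    exact closure_minimal hspan hclosed hb
  have : ‖b‖ * ‖b‖ = 0 := by rw [← CStarRing.norm_self_mul_star, hbb, norm_zero]
  have hnorm : ‖b‖ = 0 := by nlinarith [norm_nonneg b]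
  exact norm_eq_zero.mp hnorm
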